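/- arXiv:2406.07045 — 2 statements merged into one kernel-verified Lean document; each statement's English description precedes it below -/
import Mathlib

section
/- Let v > 0 be a real number that is not a natural number. Then j^{v+1} · |C(v, j)| converges to 1/|Γ(-v)| as j → ∞, where Γ is the Gamma function. -/
open Filter

/-- Generalized binomial coefficient `C(v, j) = v(v-1)⋯(v-j+1)/j!` for real `v`. -/
noncomputable def genBinom (v : ℝ) (j : ℕ) : ℝ :=
  (∏ i ∈ Finset.range j, (v - i)) / (Nat.factorial j)

/-- If `v > 0` is not a natural number, then `j^{v+1} · |C(v, j)| → 1/|Γ(-v)|`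
as `j → ∞`. -/
theorem genBinom_asymptotics (v : ℝ) (hv : 0 < v) (hnat : ¬∃ n : ℕ, v = n) :
    Tendsto (fun j : ℕ => (j : ℝ) ^ (v + 1) * |genBinom v j|) atTop
      (nhds (1 / |Real.Gamma (-v)|)) := by
  have hΓ : Real.Gamma (-v) ≠ 0 := by
    refine Real.Gamma_ne_zero fun m => ?_
    intro h
    exact hnat ⟨m, by linarith⟩
  have h1 : Tendsto (fun j : ℕ => |1 - v / (j : ℝ)|⁻¹ * |Real.GammaSeq (-v) j|⁻¹)
      atTop (nhds (1 / |Real.Gamma (-v)|)) := by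
    have hA : Tendsto (fun j : ℕ => |1 - v / (j : ℝ)|⁻¹) atTop (nhds 1) := by
      have h0 := tendsto_const_div_atTop_nhds_zero_nat v
      have h2 : Tendsto (fun j : ℕ => 1 - v / (j : ℝ)) atTop (nhds 1) := by
        simpa using tendsto_const_nhds.sub h0
      simpa using h2.abs.inv₀ (by norm_num)
    have hB := (Real.GammaSeq_tendsto_Gamma (-v)).abs.inv₀ (by simpa using hΓ)
    simpa [one_div] using hA.mul hB
  refine Tendsto.congr' ?_ h1
  filter_upwards [eventually_ge_atTop 1] with j hj
  have hj0 : (0 : ℝ) < (j : ℝ) := by exact_mod_cast hj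
  have hjne : (j : ℝ) ≠ 0 := ne_of_gt hj0
  have hjv : (j : ℝ) - v ≠ 0 := by
    intro h
    exact hnat ⟨j, by linarith⟩
  have hfac : ((Nat.factorial j : ℝ)) ≠ 0 := by positivity
  have hrv : (0 : ℝ) < (j : ℝ) ^ v := Real.rpow_pos_of_pos hj0 v
  have key : |Real.GammaSeq (-v) j| =
      ((j : ℝ) ^ v)⁻¹ * (Nat.factorial j) / ((∏ i ∈ Finset.range j, |v - i|) * |(j : ℝ) - v|) := by
    rw [Real.GammaSeq, abs_div, abs_mul, Finset.abs_prod, Finset.prod_range_succ]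
    congr 1
    · rw [abs_of_pos (Real.rpow_pos_of_pos hj0 (-v)), Real.rpow_neg hj0.le,
        Nat.abs_cast]
    · congr 1
      · exact Finset.prod_congr rfl fun i _ => by
          rw [show (-v + (i : ℝ)) = -(v - i) by ring, abs_neg]
      · rw [show (-v + (j : ℝ)) = -(v - j) by ring, abs_neg, abs_sub_comm]
  have hgb : |genBinom v j| = (∏ i ∈ Finset.range j, |v - i|) / (Nat.factorial j) := by
    rw [genBinom, abs_div, Finset.abs_prod, Nat.abs_cast]
  have hone : |1 - v / (j : ℝ)| = |(j : ℝ) - v| / (j : ℝ) := by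
    rw [show (1 : ℝ) - v / (j : ℝ) = ((j : ℝ) - v) / (j : ℝ) by field_simp, abs_div,
      abs_of_pos hj0]
  have hrpow : (j : ℝ) ^ (v + 1) = (j : ℝ) ^ v * (j : ℝ) := by
    rw [Real.rpow_add_one hjne]
  have habs : |(j : ℝ) - v| ≠ 0 := abs_ne_zero.mpr hjv
  rw [key, hgb, hone, hrpow]
  field_simp
end

section
/- Let v > 0 be real, ω a nonzero real number, and t ∈ ℝ. For each h > 0 the series ∑_{j=0}^{∞} (-1)^j C(v, j) exp(iω(t - jh)) converges absolutely, and h^{-v} ∑_{j=0}^{∞} (-1)^j C(v, j) exp(iω(t - jh)) converges to (iω)^v exp(iω t) as h → 0⁺, where (iω)^v is the principal complex power. -/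
open Filter

lemma genBinom_zero (v : ℝ) : genBinom v 0 = 1 := by simp [genBinom]

lemma genBinom_succ (v : ℝ) (j : ℕ) :
    genBinom v (j + 1) = genBinom v j * ((v - j) / (j + 1)) := by
  have h1 : ((Nat.factorial j : ℝ)) ≠ 0 := by exact_mod_cast (Nat.factorial_pos j).ne'
  have h2 : ((j : ℝ) + 1) ≠ 0 := by positivity
  have h3 : (0:ℝ) < (Nat.factorial j : ℝ) := by exact_mod_cast Nat.factorial_pos j
  rw [genBinom, genBinom, Finset.prod_range_succ, Nat.factorial_succ]
  push_cast
  rw [div_mul_div_comm, div_eq_div_iff (by positivity) (by positivity)]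
  ring

lemma abs_genBinom_succ (v : ℝ) {j : ℕ} (hj : v ≤ j) :
    |genBinom v (j + 1)| = |genBinom v j| * (((j : ℝ) - v) / (j + 1)) := by
  rw [genBinom_succ, abs_mul, abs_div]
  congr 1
  rw [abs_of_nonpos (by linarith), abs_of_pos (by positivity)]
  ring

lemma summable_abs_genBinom {v : ℝ} (hv : 0 < v) :
    Summable (fun j => |genBinom v j|) := by
  set N : ℕ := Nat.floor v + 1 with hNdef
  have hN : v < N := by exact_mod_cast Nat.lt_floor_add_one v
  set c : ℕ → ℝ := fun j => |genBinom v j| with hc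
  set d : ℕ → ℝ := fun j => j * c j with hd
  have key : ∀ k : ℕ, v * c (N + k) = d (N + k) - d (N + k + 1) := by
    intro k
    have hj : v ≤ ((N + k : ℕ) : ℝ) := by
      have : (N : ℝ) ≤ ((N + k : ℕ) : ℝ) := by exact_mod_cast Nat.le_add_right N k
      linarith
    have hrec := abs_genBinom_succ v hj
    have hne : ((N + k : ℕ) : ℝ) + 1 ≠ 0 := by positivity
    simp only [hd, hc] at *
    rw [hrec]
    push_cast
    field_simp
    ring
  have hsum : ∀ n, ∑ k ∈ Finset.range n, c (N + k) ≤ d N / v := by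
    intro n
    have ht : ∑ k ∈ Finset.range n, (d (N + k) - d (N + k + 1)) = d N - d (N + n) := by
      have := Finset.sum_range_sub' (fun k => d (N + k)) n
      simpa [add_assoc] using this
    have hmul : v * ∑ k ∈ Finset.range n, c (N + k) = d N - d (N + n) := by
      rw [Finset.mul_sum]
      simp_rw [key]
      exact ht
    have hdn : 0 ≤ d (N + n) := by
      have : 0 ≤ c (N + n) := abs_nonneg _
      have : (0:ℝ) ≤ (N + n : ℕ) := by positivity
      exact mul_nonneg this (abs_nonneg _)
    rw [le_div_iff₀ hv, mul_comm]
    linarith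
  have h1 : Summable fun k => c (N + k) :=
    summable_of_sum_range_le (fun n => abs_nonneg _) hsum
  have h2 : Summable fun k => c (k + N) := by
    simpa [add_comm] using h1
  exact (summable_nat_add_iff N).mp h2

/-- The binomial series function. -/
noncomputable def binF (v : ℝ) (w : ℂ) : ℂ := ∑' j : ℕ, (genBinom v j : ℂ) * w ^ j

/-- Derivative series of `binF`. -/
noncomputable def binD (v : ℝ) (w : ℂ) : ℂ :=
  ∑' j : ℕ, (genBinom v j : ℂ) * ((j : ℂ) * w ^ (j - 1))

lemma term_norm_le {v : ℝ} (j : ℕ) {w : ℂ} (hw : ‖w‖ ≤ 1) :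
    ‖(genBinom v j : ℂ) * w ^ j‖ ≤ |genBinom v j| := by
  rw [norm_mul, norm_pow]
  calc ‖(genBinom v j : ℂ)‖ * ‖w‖ ^ j ≤ ‖(genBinom v j : ℂ)‖ * 1 := by
        apply mul_le_mul_of_nonneg_left _ (norm_nonneg _)
        exact pow_le_one₀ (norm_nonneg w) hw
    _ = |genBinom v j| := by rw [mul_one, Complex.norm_real, Real.norm_eq_abs]

lemma summable_term {v : ℝ} (hv : 0 < v) {w : ℂ} (hw : ‖w‖ ≤ 1) :
    Summable (fun j : ℕ => (genBinom v j : ℂ) * w ^ j) :=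
  Summable.of_norm_bounded (summable_abs_genBinom hv) (fun j => term_norm_le j hw)

lemma summable_deriv_bound {v : ℝ} (hv : 0 < v) {R : ℝ} (hR0 : 0 ≤ R) (hR : R < 1) :
    Summable (fun j : ℕ => |genBinom v j| * ((j : ℝ) * R ^ (j - 1))) := by
  have hB : ∀ j, |genBinom v j| ≤ ∑' i, |genBinom v i| :=
    fun j => Summable.le_tsum (summable_abs_genBinom hv) j (fun i _ => abs_nonneg _)
  set C := ∑' i, |genBinom v i| with hC
  have h1 : Summable (fun k : ℕ => C * (((k : ℝ) + 1) * R ^ k)) := by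
    apply Summable.mul_left
    have h2 : Summable (fun k : ℕ => (k : ℝ) * R ^ k) := by
      have := summable_pow_mul_geometric_of_norm_lt_one (R := ℝ) 1
        (by rwa [Real.norm_eq_abs, abs_of_nonneg hR0])
      simpa using this
    have h3 : Summable (fun k : ℕ => R ^ k) := summable_geometric_of_lt_one hR0 hR
    simpa [add_mul, one_mul] using h2.add h3
  have h4 : Summable (fun k : ℕ => |genBinom v (k+1)| * (((k:ℝ) + 1) * R ^ k)) := by
    apply Summable.of_nonneg_of_le (fun k => by positivity) (fun k => ?_) h1
    apply mul_le_mul_of_nonneg_right (hB _) (by positivity)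
  apply (_root_.summable_nat_add_iff 1).mp
  apply h4.congr
  intro k
  have : (k + 1) - 1 = k := Nat.add_sub_cancel k 1
  rw [this]
  push_cast
  ring

lemma hasDerivAt_binF {v : ℝ} (hv : 0 < v) {w : ℂ} (hw : ‖w‖ < 1) :
    HasDerivAt (binF v) (binD v w) w := by
  set R : ℝ := (1 + ‖w‖) / 2 with hRdef
  have hR0 : 0 ≤ R := by positivity
  have hR1 : R < 1 := by rw [hRdef]; linarith
  have hwR : ‖w‖ < R := by rw [hRdef]; linarith
  have hR0' : (0:ℝ) < R := by rw [hRdef]; positivity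
  have key := hasDerivAt_tsum_of_isPreconnected
    (u := fun j : ℕ => |genBinom v j| * ((j : ℝ) * R ^ (j - 1)))
    (g := fun (j : ℕ) (z : ℂ) => (genBinom v j : ℂ) * z ^ j)
    (g' := fun (j : ℕ) (z : ℂ) => (genBinom v j : ℂ) * ((j : ℂ) * z ^ (j - 1)))
    (t := Metric.ball (0:ℂ) R) (y₀ := (0:ℂ)) (y := w)
    (summable_deriv_bound hv hR0 hR1) Metric.isOpen_ball
    ((convex_ball (0:ℂ) R).isPreconnected)
    (fun j y _ => (hasDerivAt_pow j y).const_mul _)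
    (fun j y hy => ?_) (Metric.mem_ball_self hR0')
    (summable_term hv (by simp)) (by simpa using hwR)
  · exact key
  · rw [norm_mul, Complex.norm_real, Real.norm_eq_abs, norm_mul, norm_pow,
      Complex.norm_natCast]
    have hy' : ‖y‖ ≤ R := by
      rw [Metric.mem_ball, dist_zero_right] at hy; exact hy.le
    apply mul_le_mul_of_nonneg_left _ (abs_nonneg _)
    exact mul_le_mul_of_nonneg_left (pow_le_pow_left₀ (norm_nonneg _) hy' _) (Nat.cast_nonneg _)

lemma genBinom_rec_cast (v : ℝ) (k : ℕ) :
    (genBinom v (k + 1) : ℂ) * ((k : ℂ) + 1) = (genBinom v k : ℂ) * ((v : ℂ) - k) := by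
  have h : genBinom v (k + 1) * ((k : ℝ) + 1) = genBinom v k * (v - k) := by
    rw [genBinom_succ]
    have hk : ((k : ℝ) + 1) ≠ 0 := by positivity
    field_simp
  exact_mod_cast congrArg (Complex.ofReal) h

lemma ode {v : ℝ} (hv : 0 < v) {w : ℂ} (hw : ‖w‖ < 1) :
    (1 + w) * binD v w = (v : ℂ) * binF v w := by
  have hw0 : (0 : ℝ) ≤ ‖w‖ := norm_nonneg w
  have hub := summable_deriv_bound hv hw0 hw
  have hT : Summable (fun j : ℕ => (genBinom v j : ℂ) * ((j : ℂ) * w ^ (j - 1))) := by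
    apply Summable.of_norm_bounded hub
    intro j
    rw [norm_mul, norm_mul, norm_pow, Complex.norm_natCast, Complex.norm_real,
      Real.norm_eq_abs]
  have hSb : Summable (fun j : ℕ => (genBinom v j : ℂ) * (j : ℂ) * w ^ j) := by
    apply Summable.of_norm_bounded hub
    intro j
    rw [norm_mul, norm_mul, norm_pow, Complex.norm_natCast, Complex.norm_real,
      Real.norm_eq_abs, mul_assoc]
    apply mul_le_mul_of_nonneg_left _ (abs_nonneg _)
    apply mul_le_mul_of_nonneg_left _ (Nat.cast_nonneg _)
    exact pow_le_pow_of_le_one hw0 hw.le (Nat.sub_le j 1)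
  have hSa : Summable (fun k : ℕ => (genBinom v k : ℂ) * ((v : ℂ) - k) * w ^ k) := by
    apply (((summable_term hv hw.le).mul_left (v : ℂ)).sub hSb).congr
    intro k; ring
  have hDA : binD v w = ∑' k : ℕ, (genBinom v k : ℂ) * ((v : ℂ) - k) * w ^ k := by
    rw [binD, Summable.tsum_eq_zero_add hT]
    simp only [Nat.cast_zero, zero_mul, mul_zero, zero_add]
    apply tsum_congr
    intro k
    rw [Nat.add_sub_cancel]
    have := genBinom_rec_cast v k
    push_cast
    calc (genBinom v (k+1) : ℂ) * (((k : ℂ) + 1) * w ^ k)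
        = ((genBinom v (k+1) : ℂ) * ((k : ℂ) + 1)) * w ^ k := by ring
      _ = (genBinom v k : ℂ) * ((v : ℂ) - k) * w ^ k := by rw [this]
  have hBD : w * binD v w = ∑' j : ℕ, (genBinom v j : ℂ) * (j : ℂ) * w ^ j := by
    rw [binD, ← tsum_mul_left]
    apply tsum_congr
    intro j
    cases j with
    | zero => simp
    | succ k =>
        rw [Nat.add_sub_cancel, pow_succ]
        push_cast
        ring
  calc (1 + w) * binD v w = binD v w + w * binD v w := by ring
    _ = (∑' k : ℕ, (genBinom v k : ℂ) * ((v : ℂ) - k) * w ^ k)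
        + ∑' j : ℕ, (genBinom v j : ℂ) * (j : ℂ) * w ^ j := by rw [← hDA, ← hBD]
    _ = ∑' k : ℕ, ((genBinom v k : ℂ) * ((v : ℂ) - k) * w ^ k
        + (genBinom v k : ℂ) * (k : ℂ) * w ^ k) := (Summable.tsum_add hSa hSb).symm
    _ = ∑' k : ℕ, (v : ℂ) * ((genBinom v k : ℂ) * w ^ k) := tsum_congr (fun k => by ring)
    _ = (v : ℂ) * binF v w := by rw [tsum_mul_left, binF]

lemma binF_zero (v : ℝ) : binF v 0 = 1 := by
  rw [binF, tsum_eq_single 0 (fun j hj => by simp [zero_pow hj])]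
  simp [genBinom_zero]

lemma binF_eq {v : ℝ} (hv : 0 < v) {w : ℂ} (hw : ‖w‖ ≤ 1) (hw1 : w ≠ -1) :
    binF v w = (1 + w) ^ (v : ℂ) := by
  have habs : |w.re| ≤ 1 := le_trans (Complex.abs_re_le_norm w) hw
  have hre : -1 < w.re := by
    rcases lt_or_eq_of_le (neg_le_of_abs_le habs) with h | h
    · exact h
    · exfalso
      apply hw1
      have him : w.im = 0 := by
        have h2 : w.re ^ 2 + w.im ^ 2 ≤ 1 := by
          have h3 := Complex.sq_norm w
          rw [Complex.normSq_apply] at h3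
          have h4 : ‖w‖ ≤ 1 := hw
          nlinarith [norm_nonneg w]
        nlinarith [sq_nonneg w.im]
      apply Complex.ext <;> simp [← h, him]
  have hre1 : w.re ≤ 1 := le_of_abs_le habs
  have hslit : ∀ r : ℝ, 0 ≤ r → r ≤ 1 → 0 < (1 + (r : ℂ) * w).re := by
    intro r hr0 hr1
    have : (1 + (r : ℂ) * w).re = 1 + r * w.re := by simp
    rw [this]
    nlinarith
  have hne : ∀ r : ℝ, 0 ≤ r → r ≤ 1 → 1 + (r : ℂ) * w ≠ 0 := by
    intro r hr0 hr1 h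
    have := hslit r hr0 hr1
    rw [h] at this; simp at this
  have hmem : ∀ r : ℝ, 0 ≤ r → r ≤ 1 → (1 + (r : ℂ) * w) ∈ Complex.slitPlane :=
    fun r hr0 hr1 => Or.inl (hslit r hr0 hr1)
  set φ : ℝ → ℂ := fun r =>
    binF v ((r : ℂ) * w) * Complex.exp (-(v : ℂ) * Complex.log (1 + (r : ℂ) * w)) with hφdef
  -- continuity
  have hcont : ContinuousOn φ (Set.Icc 0 1) := by
    apply ContinuousOn.mul
    · intro r₀ hr₀
      have : Tendsto (fun r : ℝ => ∑' j : ℕ, (genBinom v j : ℂ) * ((r : ℂ) * w) ^ j)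
          (nhdsWithin r₀ (Set.Icc 0 1))
          (nhds (∑' j : ℕ, (genBinom v j : ℂ) * ((r₀ : ℂ) * w) ^ j)) := by
        apply tendsto_tsum_of_dominated_convergence (summable_abs_genBinom hv)
        · intro j
          apply Tendsto.mono_left _ nhdsWithin_le_nhds
          exact (Continuous.tendsto (by continuity) r₀)
        · apply Filter.Eventually.mono self_mem_nhdsWithin
          intro r hr j
          apply term_norm_le
          rw [norm_mul, Complex.norm_real, Real.norm_eq_abs, abs_of_nonneg hr.1]
          calc r * ‖w‖ ≤ 1 * 1 := by
                apply mul_le_mul hr.2 hw (norm_nonneg _) zero_le_one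
            _ = 1 := one_mul 1
      exact this
    · intro r₀ hr₀
      apply ContinuousAt.continuousWithinAt
      apply Complex.continuous_exp.continuousAt.comp
      apply ContinuousAt.mul continuousAt_const
      exact ContinuousAt.clog
        (by continuity : Continuous (fun r : ℝ => 1 + (r : ℂ) * w)).continuousAt
        (hmem r₀ hr₀.1 hr₀.2)
  -- derivative zero on Ico 0 1
  have hderiv : ∀ r ∈ Set.Ico (0:ℝ) 1, HasDerivAt φ 0 r := by
    intro r hr
    have hrw : ‖(r : ℂ) * w‖ < 1 := by
      rw [norm_mul, Complex.norm_real, Real.norm_eq_abs, abs_of_nonneg hr.1]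
      calc r * ‖w‖ ≤ r * 1 := mul_le_mul_of_nonneg_left hw hr.1
        _ = r := mul_one r
        _ < 1 := hr.2
    have haff : HasDerivAt (fun r : ℝ => (r : ℂ) * w) w r := by
      have := ((hasDerivAt_id ((r : ℝ) : ℂ)).mul_const w).comp_ofReal
      simpa using this
    have h1 : HasDerivAt (fun r : ℝ => binF v ((r : ℂ) * w)) (w * binD v ((r : ℂ) * w)) r := by
      have := (hasDerivAt_binF hv hrw).scomp r (by exact haff)
      simpa [Function.comp_def] using this
    have hlog : HasDerivAt (fun r : ℝ => Complex.log (1 + (r : ℂ) * w))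
        (w * (1 + (r : ℂ) * w)⁻¹) r := by
      have := (Complex.hasDerivAt_log (hmem r hr.1 hr.2.le)).scomp r (haff.const_add 1)
      simpa [Function.comp_def] using this
    have hexp : HasDerivAt (fun r : ℝ => Complex.exp (-(v : ℂ) * Complex.log (1 + (r : ℂ) * w)))
        (Complex.exp (-(v : ℂ) * Complex.log (1 + (r : ℂ) * w))
          * (-(v : ℂ) * (w * (1 + (r : ℂ) * w)⁻¹))) r := (hlog.const_mul (-(v:ℂ))).cexp
    have hφ' := h1.mul hexp
    set E := Complex.exp (-(v : ℂ) * Complex.log (1 + (r : ℂ) * w)) with hEdef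
    have hzero : w * binD v ((r : ℂ) * w) * E
        + binF v ((r : ℂ) * w) * (E * (-(v : ℂ) * (w * (1 + (r : ℂ) * w)⁻¹))) = 0 := by
      have hodeq := ode hv hrw
      have hz := hne r hr.1 hr.2.le
      have hinv : (1 + (r:ℂ)*w) * (1 + (r:ℂ)*w)⁻¹ = 1 := mul_inv_cancel₀ hz
      linear_combination (w * E * (1 + (r:ℂ)*w)⁻¹) * hodeq - (w * E * binD v ((r:ℂ)*w)) * hinv
    rw [hzero] at hφ'
    exact hφ'
  have h10 : φ 1 = φ 0 := constant_of_has_deriv_right_zero hcont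
    (fun r hr => (hderiv r hr).hasDerivWithinAt) 1 (by norm_num)
  rw [hφdef] at h10
  simp only [Complex.ofReal_one, one_mul, Complex.ofReal_zero, zero_mul, add_zero,
    Complex.log_one, mul_zero, Complex.exp_zero, binF_zero, mul_one] at h10
  have h1w : (1 : ℂ) + w ≠ 0 := by
    have := hne 1 zero_le_one le_rfl
    simpa using this
  calc binF v w
      = binF v w * (Complex.exp (-(v : ℂ) * Complex.log (1 + w))
        * Complex.exp ((v : ℂ) * Complex.log (1 + w))) := by
        rw [← Complex.exp_add]; simp
    _ = (binF v w * Complex.exp (-(v : ℂ) * Complex.log (1 + w)))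
        * Complex.exp ((v : ℂ) * Complex.log (1 + w)) := by ring
    _ = Complex.exp ((v : ℂ) * Complex.log (1 + w)) := by rw [h10, one_mul]
    _ = (1 + w) ^ (v : ℂ) := by rw [Complex.cpow_def_of_ne_zero h1w, mul_comm]

/-- Complex exponentials are eigenfunctions of the Grünwald–Letnikov fractional
derivative of order `v > 0`, with eigenvalue `(iω)^v`: for each `h > 0` the series
`∑_j (-1)^j C(v,j) e^{iω(t - jh)}` converges absolutely, and
`h^{-v} ∑_j (-1)^j C(v,j) e^{iω(t - jh)} → (iω)^v e^{iωt}` as `h → 0⁺`. -/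
theorem GL_frac_deriv_of_exponential (v ω t : ℝ) (hv : 0 < v) (hω : ω ≠ 0) :
    (∀ h : ℝ, 0 < h →
        Summable (fun j : ℕ =>
          ‖(-1 : ℂ) ^ j * (genBinom v j : ℂ) *
            Complex.exp (Complex.I * (ω : ℂ) * ((t : ℂ) - (j : ℂ) * (h : ℂ)))‖)) ∧
      Tendsto
        (fun h : ℝ =>
          ((h ^ (-v) : ℝ) : ℂ) *
            ∑' j : ℕ, (-1 : ℂ) ^ j * (genBinom v j : ℂ) *
              Complex.exp (Complex.I * (ω : ℂ) * ((t : ℂ) - (j : ℂ) * (h : ℂ))))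
        (nhdsWithin 0 (Set.Ioi 0))
        (nhds ((Complex.I * (ω : ℂ)) ^ (v : ℂ) * Complex.exp (Complex.I * (ω : ℂ) * (t : ℂ)))) := by
  have hnorm : ∀ (h : ℝ) (j : ℕ),
      ‖(-1 : ℂ) ^ j * (genBinom v j : ℂ) *
        Complex.exp (Complex.I * (ω : ℂ) * ((t : ℂ) - (j : ℂ) * (h : ℂ)))‖
      = |genBinom v j| := by
    intro h j
    rw [norm_mul, norm_mul, norm_pow, norm_neg, norm_one, one_pow, one_mul,
      Complex.norm_real, Real.norm_eq_abs, Complex.norm_exp]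
    have : (Complex.I * (ω : ℂ) * ((t : ℂ) - (j : ℂ) * (h : ℂ))).re = 0 := by
      simp [Complex.mul_re, Complex.mul_im]
    rw [this, Real.exp_zero, mul_one]
  constructor
  · intro h _
    exact (summable_abs_genBinom hv).congr (fun j => (hnorm h j).symm)
  · -- the limit
    have hπ := Real.pi_pos
    set δ : ℝ := Real.pi / |ω| with hδdef
    have hδ : 0 < δ := by positivity
    -- the comparison function
    set q : ℝ → ℂ := fun h => (1 - Complex.exp (-(Complex.I * (ω:ℂ) * (h:ℂ)))) / (h:ℂ) with hqdef
    have keyq : Tendsto q (nhdsWithin 0 (Set.Ioi 0)) (nhds (Complex.I * (ω:ℂ))) := by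
      have hd : HasDerivAt (fun h : ℝ => Complex.exp (-(Complex.I * (ω:ℂ) * (h:ℂ))))
          (-(Complex.I * (ω:ℂ))) 0 := by
        have h1 : HasDerivAt (fun z : ℂ => Complex.exp (-(Complex.I * (ω:ℂ)) * z))
            (-(Complex.I * (ω:ℂ))) ((0:ℝ):ℂ) := by
          have := ((hasDerivAt_id ((0:ℝ):ℂ)).const_mul (-(Complex.I * (ω:ℂ)))).cexp
          simpa using this
        have h2 := h1.comp_ofReal
        apply h2.congr_deriv rfl |>.congr_of_eventuallyEq ?_
        · filter_upwards with x
          ring_nf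
      rw [hasDerivAt_iff_tendsto_slope] at hd
      have hneg := hd.neg
      have hmono : nhdsWithin (0:ℝ) (Set.Ioi 0) ≤ nhdsWithin 0 {(0:ℝ)}ᶜ :=
        nhdsWithin_mono 0 (fun x hx => ne_of_gt hx)
      have hneg' : Tendsto (fun x => -slope (fun y : ℝ => Complex.exp (-(Complex.I * (ω:ℂ) * (y:ℂ)))) 0 x)
          (nhdsWithin (0:ℝ) (Set.Ioi 0)) (nhds (Complex.I * (ω:ℂ))) := by
        simpa using hneg.mono_left hmono
      apply Tendsto.congr' ?_ hneg'
      filter_upwards [self_mem_nhdsWithin] with x hx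
      have hx0 : ((x : ℝ) : ℂ) ≠ 0 := by exact_mod_cast ne_of_gt hx
      show -slope (fun y : ℝ => Complex.exp (-(Complex.I * (ω:ℂ) * (y:ℂ)))) 0 x
          = (1 - Complex.exp (-(Complex.I * (ω:ℂ) * (x:ℂ)))) / (x:ℂ)
      simp only [slope, vsub_eq_sub, sub_zero, mul_zero, neg_zero, Complex.exp_zero,
        Complex.real_smul, Complex.ofReal_inv, Complex.ofReal_zero]
      field_simp
      ring
    have hcpow : ContinuousAt (fun z : ℂ => z ^ (v:ℂ)) (Complex.I * (ω:ℂ)) := by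
      exact continuousAt_cpow_const (Or.inr (by simp [Complex.mul_im, hω]))
    have hψ : Tendsto (fun h : ℝ => q h ^ (v:ℂ) * Complex.exp (Complex.I * (ω:ℂ) * (t:ℂ)))
        (nhdsWithin 0 (Set.Ioi 0))
        (nhds ((Complex.I * (ω:ℂ)) ^ (v:ℂ) * Complex.exp (Complex.I * (ω:ℂ) * (t:ℂ)))) :=
      (hcpow.tendsto.comp keyq).mul_const _
    apply Tendsto.congr' ?_ hψ
    filter_upwards [Ioo_mem_nhdsGT_of_mem (Set.left_mem_Ico.mpr hδ)] with h hh
    have hpos : 0 < h := hh.1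
    have hch : ((h:ℝ):ℂ) ≠ 0 := by exact_mod_cast ne_of_gt hpos
    set z0 : ℂ := Complex.exp (-(Complex.I * (ω:ℂ) * (h:ℂ))) with hz0def
    have hz0norm : ‖z0‖ = 1 := by
      rw [hz0def, Complex.norm_exp]
      have : (-(Complex.I * (ω:ℂ) * (h:ℂ))).re = 0 := by simp [Complex.mul_re]
      rw [this, Real.exp_zero]
    have hz0ne : z0 ≠ 1 := by
      intro hz
      rw [hz0def, Complex.exp_eq_one_iff] at hz
      obtain ⟨n, hn⟩ := hz
      have him := congrArg Complex.im hn
      simp [Complex.mul_im, Complex.mul_re] at him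
      -- him should say -(ω * h) = n * (2 * π)
      have habs : |ω| * h < Real.pi := by
        rw [hδdef] at hh
        have := hh.2
        rw [lt_div_iff₀ (abs_pos.mpr hω)] at this
        linarith [this]
      rcases eq_or_ne n 0 with rfl | hn0
      · simp at him
        rcases him with h1 | h1
        · exact hω h1
        · exact (ne_of_gt hpos) h1
      · have h1 : (1:ℝ) ≤ |(n:ℝ)| := by exact_mod_cast Int.one_le_abs hn0
        have h2 : |ω * h| = |(n:ℝ)| * (2 * Real.pi) := by
          rw [← abs_neg (ω * h), him, abs_mul, abs_of_pos (by positivity : (0:ℝ) < 2 * Real.pi)]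
        rw [abs_mul, abs_of_pos hpos] at h2
        nlinarith [hπ]
    have hsum_eq : (∑' j : ℕ, (-1 : ℂ) ^ j * (genBinom v j : ℂ) *
          Complex.exp (Complex.I * (ω : ℂ) * ((t : ℂ) - (j : ℂ) * (h : ℂ))))
        = Complex.exp (Complex.I * (ω:ℂ) * (t:ℂ)) * binF v (-z0) := by
      rw [binF, ← tsum_mul_left]
      apply tsum_congr
      intro j
      have hexpj : Complex.exp (Complex.I * (ω:ℂ) * ((t:ℂ) - (j:ℂ) * (h:ℂ)))
          = Complex.exp (Complex.I * (ω:ℂ) * (t:ℂ)) * z0 ^ j := by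
        have harg : Complex.I * (ω:ℂ) * ((t:ℂ) - (j:ℂ) * (h:ℂ))
            = Complex.I * (ω:ℂ) * (t:ℂ) + (j:ℂ) * -(Complex.I * (ω:ℂ) * (h:ℂ)) := by ring
        rw [hz0def, harg, Complex.exp_add, Complex.exp_nat_mul]
      rw [hexpj, neg_pow]
      ring
    have h1z0 : (1:ℂ) - z0 ≠ 0 := sub_ne_zero.mpr (Ne.symm hz0ne)
    have hbinF : binF v (-z0) = ((1:ℂ) - z0) ^ (v:ℂ) := by
      have hb := binF_eq hv (w := -z0) (by rw [norm_neg, hz0norm]) (by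
        intro hc
        exact hz0ne (neg_injective hc))
      rw [hb]
      congr 1
    have hqne : q h ≠ 0 := div_ne_zero h1z0 hch
    have hfac : (1:ℂ) - z0 = (h:ℂ) * q h := by
      rw [hqdef, hz0def]
      field_simp
    have hhv : ((h ^ v : ℝ) : ℂ) = Complex.exp ((Real.log h : ℂ) * (v:ℂ)) := by
      rw [Real.rpow_def_of_pos hpos, Complex.ofReal_exp, Complex.ofReal_mul]
    have hsplit : ((1:ℂ) - z0) ^ (v:ℂ) = ((h ^ v : ℝ) : ℂ) * (q h) ^ (v:ℂ) := by
      rw [hfac, Complex.cpow_def_of_ne_zero (mul_ne_zero hch hqne),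
        Complex.log_ofReal_mul hpos hqne, add_mul, Complex.exp_add,
        Complex.cpow_def_of_ne_zero hqne, hhv]
    have hcoef : ((h ^ (-v) : ℝ) : ℂ) * ((h ^ v : ℝ) : ℂ) = 1 := by
      rw [← Complex.ofReal_mul, ← Real.rpow_add hpos, neg_add_cancel, Real.rpow_zero,
        Complex.ofReal_one]
    rw [hsum_eq, hbinF, hsplit]
    linear_combination (-(Complex.exp (Complex.I * (ω:ℂ) * (t:ℂ)) * q h ^ (v:ℂ))) * hcoef
end
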